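/- (Dunford–Pettis, sufficiency) Let (X,E) be a measurable space and let Q be an equicontinuous set of probability measures on (X,E). Then for every sequence {μ_n}_{n≥1} from Q there exist a subsequence {n_j}_{j≥1} and a probability measure μ on (X,E) such that μ(E') = lim_{j→∞} μ_{n_j}(E') for every E' ∈ E. -/

import Mathlib

open MeasureTheory Filter MeasurableSpace Set ENNReal

section helpers
variable {Y : Type*} [M : MeasurableSpace Y]

/-- Simple-function approximation packaged with plain functions. -/
lemma exists_simple_approx {h : Y → ℝ≥0∞} (hm : Measurable h) :
    ∃ g : ℕ → Y → ℝ≥0∞, (∀ k, Measurable (g k)) ∧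
      (∀ ⦃k k' : ℕ⦄, k ≤ k' → ∀ x, g k x ≤ g k' x) ∧
      (∀ x, (⨆ k, g k x) = h x) ∧
      (∀ k, ∃ (T : Finset ℝ≥0∞) (A : ℝ≥0∞ → Set Y),
        (∀ c, MeasurableSet (A c)) ∧ (∀ c ∈ T, ∃ x, g k x = c) ∧
        (∀ ρ : Measure Y, ∫⁻ x, g k x ∂ρ = ∑ c ∈ T, c * ρ (A c))) := by
  refine ⟨fun k => ⇑(SimpleFunc.eapprox h k), fun k => (SimpleFunc.eapprox h k).measurable,
    ?_, fun x => SimpleFunc.iSup_eapprox_apply hm x, ?_⟩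
  · intro k k' hkk' x
    exact SimpleFunc.coe_le_coe.2 (SimpleFunc.monotone_eapprox h hkk') x
  · intro k
    refine ⟨(SimpleFunc.eapprox h k).range, fun c => (SimpleFunc.eapprox h k) ⁻¹' {c},
      fun c => (SimpleFunc.eapprox h k).measurableSet_fiber c,
      fun c hc => SimpleFunc.mem_range.1 hc, fun ρ => ?_⟩
    rw [SimpleFunc.lintegral_eq_lintegral]
    rfl

lemma measurableSet_le_sub {h g : Y → ℝ≥0∞} (hm : Measurable h) (hg : Measurable g)
    (δ : ℝ≥0∞) : MeasurableSet {x | δ ≤ h x - g x} :=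
  measurableSet_le measurable_const (hm.sub hg)

lemma measurable_min_rnDeriv (κ ν : Measure Y) :
    Measurable (fun x => min (κ.rnDeriv ν x) 1) :=
  (Measure.measurable_rnDeriv κ ν).min measurable_const

end helpers


section aux
variable {X : Type*} [m : MeasurableSpace X]

lemma tendsto_measure_iUnion_of_equi
    (Q : Set (Measure X)) (hprob : ∀ μ ∈ Q, IsProbabilityMeasure μ)
    (hequi : ∀ E : ℕ → Set X, (∀ n, MeasurableSet (E n)) → Antitone E →
      (⋂ n, E n) = ∅ → ∀ ε : ENNReal, 0 < ε → ∃ p : ℕ, ∀ μ ∈ Q, μ (E p) < ε)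
    (ν : ℕ → Measure X) (hν : ∀ j, ν j ∈ Q)
    (A : ℕ → Set X) (hd : Pairwise (Function.onFun Disjoint A)) (hmA : ∀ k, MeasurableSet (A k))
    (l : ℕ → ℝ≥0∞) (hl : ∀ k, Tendsto (fun j => ν j (A k)) atTop (nhds (l k))) :
    Tendsto (fun j => ν j (⋃ k, A k)) atTop (nhds (∑' k, l k)) := by
  have hfin : ∀ (s : Finset ℕ) (j : ℕ), ∑ k ∈ s, ν j (A k) ≤ 1 := by
    intro s j
    haveI := hprob _ (hν j)
    rw [← measure_biUnion_finset (fun i _ k _ hik => hd hik) (fun k _ => hmA k)]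
    exact prob_le_one
  have hsum_le : ∀ s : Finset ℕ, ∑ k ∈ s, l k ≤ 1 := fun s =>
    le_of_tendsto' (tendsto_finset_sum s fun k _ => hl k) (fun j => hfin s j)
  have ha : ∑' k, l k ≤ 1 := by
    rw [ENNReal.tsum_eq_iSup_sum]; exact iSup_le hsum_le
  rw [ENNReal.tendsto_nhds (ha.trans_lt one_lt_top).ne]
  intro ε hε
  set T : ℕ → Set X := fun p => ⋃ k, ⋃ (_ : p ≤ k), A k with hT
  have hmT : ∀ p, MeasurableSet (T p) := fun p =>
    MeasurableSet.iUnion fun k => MeasurableSet.iUnion fun _ => hmA k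
  have hTanti : Antitone T := by
    intro p q hpq x hx
    obtain ⟨k, hk, hxk⟩ : ∃ k, q ≤ k ∧ x ∈ A k := by simpa [hT, mem_iUnion] using hx
    simp only [hT, mem_iUnion]
    exact ⟨k, hpq.trans hk, hxk⟩
  have hTempty : ⋂ p, T p = ∅ := by
    ext x
    simp only [mem_iInter, mem_empty_iff_false, iff_false]
    intro hx
    obtain ⟨k0, hx0⟩ : ∃ k, x ∈ A k := by simpa [hT, mem_iUnion] using hx 0
    obtain ⟨k1, hk1, hx1⟩ : ∃ k, k0 + 1 ≤ k ∧ x ∈ A k := by simpa [hT, mem_iUnion] using hx (k0 + 1)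
    exact Set.disjoint_left.1 (hd (show k0 ≠ k1 by omega)) hx0 hx1
  obtain ⟨p, hp⟩ := hequi T hmT hTanti hTempty (ε / 2) (ENNReal.half_pos hε.ne')
  have hTν : ∀ j, ν j (T p) ≤ ε / 2 := fun j => (hp _ (hν j)).le
  have hbiU : ∀ j, ∑ k ∈ Finset.range p, ν j (A k) = ν j (⋃ k ∈ Finset.range p, A k) :=
    fun j => (measure_biUnion_finset (fun i _ k _ hik => hd hik) (fun k _ => hmA k)).symm
  have htail : ∀ s : Finset ℕ, (∀ k ∈ s, p ≤ k) → ∑ k ∈ s, l k ≤ ε / 2 := by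
    intro s hs
    refine le_of_tendsto' (tendsto_finset_sum s fun k _ => hl k) fun j => ?_
    calc ∑ k ∈ s, ν j (A k) = ν j (⋃ k ∈ s, A k) :=
          (measure_biUnion_finset (fun i _ k _ hik => hd hik) (fun k _ => hmA k)).symm
      _ ≤ ν j (T p) := measure_mono <| iUnion₂_subset fun k hk x hx =>
          mem_iUnion.2 ⟨k, mem_iUnion.2 ⟨hs k hk, hx⟩⟩
      _ ≤ ε / 2 := hTν j
  have hta : ∑' k, l k ≤ ∑ k ∈ Finset.range p, l k + ε / 2 := by
    rw [ENNReal.tsum_eq_iSup_sum]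
    refine iSup_le fun s => ?_
    have hsub : s ⊆ s ∪ Finset.range p := Finset.subset_union_left
    calc ∑ k ∈ s, l k ≤ ∑ k ∈ s ∪ Finset.range p, l k :=
          Finset.sum_le_sum_of_subset hsub
      _ = ∑ k ∈ (s ∪ Finset.range p) \ Finset.range p, l k + ∑ k ∈ Finset.range p, l k :=
          (Finset.sum_sdiff Finset.subset_union_right).symm
      _ ≤ ε / 2 + ∑ k ∈ Finset.range p, l k := by
          gcongr
          refine htail _ fun k hk => ?_
          have := (Finset.mem_sdiff.1 hk).2
          simpa using not_lt.1 (by simpa [Finset.mem_range] using this)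
      _ = ∑ k ∈ Finset.range p, l k + ε / 2 := add_comm _ _
  set S := ∑ k ∈ Finset.range p, l k with hS
  have hSfin : S ≠ ⊤ := ((ENNReal.sum_le_tsum _).trans ha).trans_lt one_lt_top |>.ne
  have hfin_t : Tendsto (fun j => ∑ k ∈ Finset.range p, ν j (A k)) atTop (nhds S) :=
    tendsto_finset_sum _ fun k _ => hl k
  have hev := (ENNReal.tendsto_nhds hSfin).1 hfin_t (ε / 2) (ENNReal.half_pos hε.ne')
  filter_upwards [hev] with j hj
  constructor
  · rw [tsub_le_iff_right]
    have h1 : S ≤ ∑ k ∈ Finset.range p, ν j (A k) + ε / 2 := tsub_le_iff_right.1 hj.1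
    have h2 : ∑ k ∈ Finset.range p, ν j (A k) ≤ ν j (⋃ k, A k) := by
      rw [hbiU j]
      exact measure_mono (iUnion₂_subset fun k _ => subset_iUnion A k)
    calc ∑' k, l k ≤ S + ε / 2 := hta
      _ ≤ (ν j (⋃ k, A k) + ε / 2) + ε / 2 := by gcongr; exact h1.trans (by gcongr)
      _ = ν j (⋃ k, A k) + ε := by rw [add_assoc, ENNReal.add_halves]
  · have hsplit : (⋃ k, A k) ⊆ (⋃ k ∈ Finset.range p, A k) ∪ T p := by
      intro x hx
      obtain ⟨k, hk⟩ := mem_iUnion.1 hx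
      rcases lt_or_ge k p with h | h
      · exact Or.inl (mem_iUnion₂.2 ⟨k, Finset.mem_range.2 h, hk⟩)
      · exact Or.inr (mem_iUnion.2 ⟨k, mem_iUnion.2 ⟨h, hk⟩⟩)
    calc ν j (⋃ k, A k) ≤ ν j ((⋃ k ∈ Finset.range p, A k) ∪ T p) := measure_mono hsplit
      _ ≤ ν j (⋃ k ∈ Finset.range p, A k) + ν j (T p) := measure_union_le _ _
      _ ≤ ∑ k ∈ Finset.range p, ν j (A k) + ε / 2 := by rw [← hbiU j]; gcongr; exact hTν j
      _ ≤ (S + ε / 2) + ε / 2 := by gcongr; exact hj.2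
      _ ≤ ∑' k, l k + ε := by
          rw [add_assoc, ENNReal.add_halves]; gcongr; exact ENNReal.sum_le_tsum _

end aux

/-- (Dunford–Pettis, sufficiency) Let `Q` be an equicontinuous set of probability measures
on a measurable space `(X,E)`: for every decreasing sequence of measurable sets with empty
intersection and every `ε > 0`, some tail set has measure `< ε` uniformly over `Q`.
Then every sequence from `Q` has a subsequence converging setwise to some probability
measure `μ` on `(X,E)`. -/
theorem stmt11 {X : Type*} [MeasurableSpace X]
    (Q : Set (Measure X)) (hprob : ∀ μ ∈ Q, IsProbabilityMeasure μ)
    (hequi : ∀ E : ℕ → Set X, (∀ n, MeasurableSet (E n)) → Antitone E →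
      (⋂ n, E n) = ∅ → ∀ ε : ENNReal, 0 < ε → ∃ p : ℕ, ∀ μ ∈ Q, μ (E p) < ε)
    (μseq : ℕ → Measure X) (hμseq : ∀ n, μseq n ∈ Q) :
    ∃ φ : ℕ → ℕ, StrictMono φ ∧
      ∃ μ : Measure X, IsProbabilityMeasure μ ∧
        ∀ E' : Set X, MeasurableSet E' →
          Tendsto (fun j => μseq (φ j) E') atTop (nhds (μ E')) := by
  classical
  have hPn : ∀ n, IsProbabilityMeasure (μseq n) := fun n => hprob _ (hμseq n)
  -- the dominating finite measure
  set lam : Measure X := Measure.sum (fun n => ((2 : ℝ≥0∞)⁻¹ ^ (n + 1)) • μseq n) with hlam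
  have hlam_univ : lam univ ≤ 1 := by
    rw [hlam, Measure.sum_apply _ MeasurableSet.univ]
    simp only [Measure.smul_apply, smul_eq_mul]
    have : ∀ n : ℕ, ((2 : ℝ≥0∞)⁻¹ ^ (n + 1)) * μseq n univ ≤ 2⁻¹ ^ (n + 1) := by
      intro n
      haveI := hPn n
      simp [measure_univ]
    refine (ENNReal.tsum_le_tsum this).trans ?_
    have h2 : ∑' n : ℕ, ((2 : ℝ≥0∞)⁻¹ ^ (n + 1)) = (∑' n : ℕ, (2 : ℝ≥0∞)⁻¹ ^ n) * 2⁻¹ := by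
      rw [← ENNReal.tsum_mul_right]
      exact tsum_congr fun n => by rw [pow_succ]
    rw [h2, ENNReal.tsum_geometric, ENNReal.one_sub_inv_two, inv_inv]
    rw [ENNReal.mul_inv_cancel two_ne_zero ENNReal.ofNat_ne_top]
  haveI hlam_fin : IsFiniteMeasure lam := ⟨hlam_univ.trans_lt one_lt_top⟩
  have hac : ∀ n, μseq n ≪ lam := by
    intro n
    refine Measure.AbsolutelyContinuous.mk fun s hs h0 => ?_
    have hle := Measure.le_sum (fun n => ((2 : ℝ≥0∞)⁻¹ ^ (n + 1)) • μseq n) n s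
    rw [← hlam, h0] at hle
    simp only [Measure.smul_apply, smul_eq_mul, nonpos_iff_eq_zero, mul_eq_zero] at hle
    rcases hle with h | h
    · exact absurd h (pow_ne_zero _ (ENNReal.inv_ne_zero.2 ENNReal.ofNat_ne_top))
    · exact h
  set f : ℕ → X → ℝ≥0∞ := fun n => (μseq n).rnDeriv lam with hff
  have hf_meas : ∀ n, Measurable (f n) := fun n => Measure.measurable_rnDeriv _ _
  have hwd : ∀ n, lam.withDensity (f n) = μseq n := fun n =>
    Measure.withDensity_rnDeriv_eq _ _ (hac n)
  -- a countably generated sub-σ-algebra making all f n measurable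
  obtain ⟨b, hb_count, hb_gen⟩ :=
    (inferInstance : MeasurableSpace.CountablyGenerated ℝ≥0∞).isCountablyGenerated
  set S : Set (Set X) := ⋃ n, (preimage (f n)) '' b with hSdef
  have hS_count : S.Countable := countable_iUnion fun n => hb_count.image _
  have hFm : generateFrom S ≤ ‹MeasurableSpace X› := by
    refine generateFrom_le ?_
    rintro s hs
    obtain ⟨n, t, ht, rfl⟩ := by simpa [hSdef] using hs
    exact (hf_meas n) (hb_gen ▸ measurableSet_generateFrom ht)
  have hfF : ∀ n, Measurable[generateFrom S] (f n) := by
    intro n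
    rw [@measurable_iff_comap_le, hb_gen, comap_generateFrom]
    exact generateFrom_mono (subset_iUnion (fun n => (preimage (f n)) '' b) n)
  -- countable generating algebra
  set 𝒜 : Set (Set X) := generateSetAlgebra S with h𝒜
  have h𝒜alg : IsSetAlgebra 𝒜 := isSetAlgebra_generateSetAlgebra
  have h𝒜count : 𝒜.Countable := countable_generateSetAlgebra hS_count
  have hgen𝒜 : generateFrom 𝒜 = generateFrom S := generateFrom_generateSetAlgebra_eq
  obtain ⟨e, he⟩ := h𝒜count.exists_eq_range ⟨∅, h𝒜alg.empty_mem⟩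
  -- diagonal subsequence
  obtain ⟨L, φ, hφ, hconv0⟩ :=
    SeqCompactSpace.tendsto_subseq (fun n (i : ℕ) => μseq n (e i))
  rw [tendsto_pi_nhds] at hconv0
  have hconv : ∀ i, Tendsto (fun j => μseq (φ j) (e i)) atTop (nhds (L i)) := by
    intro i
    simpa [Function.comp] using hconv0 i
  -- convergence on all (generateFrom S)-measurable sets
  have hF_conv : ∀ A : Set X, MeasurableSet[generateFrom S] A →
      ∃ l, Tendsto (fun j => μseq (φ j) A) atTop (nhds l) := by
    intro A hA
    refine MeasurableSpace.induction_on_inter (m := generateFrom S)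
      (C := fun A _ => ∃ l, Tendsto (fun j => μseq (φ j) A) atTop (nhds l))
      hgen𝒜.symm (fun s hs t ht _ => h𝒜alg.inter_mem hs ht) ?_ ?_ ?_ ?_ _ hA
    · exact ⟨0, by simp only [measure_empty]; exact tendsto_const_nhds⟩
    · intro t ht
      rw [he] at ht
      obtain ⟨i, rfl⟩ := ht
      exact ⟨L i, hconv i⟩
    · rintro t ht ⟨l, hl⟩
      have hl1 : l ≤ 1 := le_of_tendsto hl
        (Eventually.of_forall fun j => by haveI := hPn (φ j); exact prob_le_one)
      refine ⟨1 - l, ?_⟩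
      have hcq : ∀ j, μseq (φ j) tᶜ = 1 - μseq (φ j) t := fun j => by
        haveI := hPn (φ j)
        rw [measure_compl (hFm _ ht) (measure_ne_top _ _), measure_univ]
      simp only [hcq]
      exact ENNReal.Tendsto.sub tendsto_const_nhds hl (Or.inl one_ne_top)
    · rintro g hgd hgm hgl
      choose l hl using hgl
      exact ⟨∑' k, l k, tendsto_measure_iUnion_of_equi Q hprob hequi _
        (fun j => hμseq (φ j)) g hgd (fun k => hFm _ (hgm k)) l hl⟩
  -- convergence on ALL measurable sets
  have hconv_all : ∀ E' : Set X, MeasurableSet E' →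
      ∃ l, Tendsto (fun j => μseq (φ j) E') atTop (nhds l) := by
    intro E' hE'
    set lamF := lam.trim hFm with hlamF
    set kap := (lam.restrict E').trim hFm with hkap
    haveI hlamF_fin : IsFiniteMeasure lamF := isFiniteMeasure_trim hFm
    haveI hkap_fin : IsFiniteMeasure kap := isFiniteMeasure_trim hFm
    have hkle : kap ≤ lamF := by
      refine Measure.le_iff.2 fun s hs => ?_
      rw [hkap, hlamF, trim_measurableSet_eq hFm hs, trim_measurableSet_eq hFm hs,
        Measure.restrict_apply (hFm _ hs)]
      exact measure_mono inter_subset_left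
    have h0_le_one : kap.rnDeriv lamF ≤ᵐ[lamF] 1 := Measure.rnDeriv_le_one_of_le hkle
    set h : X → ℝ≥0∞ := fun x => min (kap.rnDeriv lamF x) 1 with hh
    have h_meas : Measurable[generateFrom S] h := @measurable_min_rnDeriv X (generateFrom S) kap lamF
    have h_le_one : ∀ x, h x ≤ 1 := fun x => min_le_right _ _
    have h_ae : h =ᵐ[lamF] kap.rnDeriv lamF := by
      filter_upwards [h0_le_one] with x hx
      simpa [hh] using min_eq_left hx
    have hwdh : lamF.withDensity h = kap := by
      rw [withDensity_congr_ae h_ae,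
        Measure.withDensity_rnDeriv_eq _ _ hkle.absolutelyContinuous]
    -- key identity
    have hkey : ∀ n, μseq n E' = ∫⁻ x, f n x * h x ∂lam := by
      intro n
      have h1 : μseq n E' = ∫⁻ x, f n x ∂(lam.restrict E') := by
        rw [← hwd n, withDensity_apply _ hE']
      have h2 : ∫⁻ x, f n x ∂(lam.restrict E') = ∫⁻ x, f n x ∂kap :=
        (lintegral_trim hFm (hfF n)).symm
      have h3 : ∫⁻ x, f n x ∂kap = ∫⁻ x, (h * f n) x ∂lamF := by
        rw [← hwdh]
        exact lintegral_withDensity_eq_lintegral_mul lamF h_meas (hfF n)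
      have h4 : ∫⁻ x, (h * f n) x ∂lamF = ∫⁻ x, (h * f n) x ∂lam :=
        lintegral_trim hFm (h_meas.mul (hfF n))
      rw [h1, h2, h3, h4]
      exact lintegral_congr fun x => by simp [Pi.mul_apply, mul_comm]
    -- simple approximation of h from below (within the sub-σ-algebra)
    obtain ⟨g, hg_meas, hg_mono, hg_sup, hg_repr⟩ :=
      @exists_simple_approx X (generateFrom S) h h_meas
    have hg_le_h : ∀ k x, g k x ≤ h x := fun k x => by
      rw [← hg_sup x]; exact le_iSup (fun k => g k x) k
    have hg_measm : ∀ k, Measurable (g k) := fun k => (hg_meas k).mono hFm le_rfl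
    -- representation of approximating integrals and their convergence
    have hsimple : ∀ k, ∃ v, Tendsto (fun j => ∫⁻ x, f (φ j) x * g k x ∂lam) atTop (nhds v) := by
      intro k
      obtain ⟨T, A, hAm, hAr, hAint⟩ := hg_repr k
      have hrepr : ∀ n, ∫⁻ x, f n x * g k x ∂lam = ∑ c ∈ T, c * μseq n (A c) := by
        intro n
        calc ∫⁻ x, f n x * g k x ∂lam
            = ∫⁻ x, ((f n) * (g k)) x ∂lam := lintegral_congr fun x => rfl
          _ = ∫⁻ x, g k x ∂(lam.withDensity (f n)) :=
              (lintegral_withDensity_eq_lintegral_mul lam (hf_meas n) (hg_measm k)).symm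
          _ = ∫⁻ x, g k x ∂(μseq n) := by rw [hwd n]
          _ = ∫⁻ x, g k x ∂((μseq n).trim hFm) := (lintegral_trim hFm (hg_meas k)).symm
          _ = ∑ c ∈ T, c * ((μseq n).trim hFm) (A c) := hAint _
          _ = ∑ c ∈ T, c * μseq n (A c) :=
              Finset.sum_congr rfl fun c _ => by
                rw [trim_measurableSet_eq hFm (hAm c)]
      choose l hl using fun c : ℝ≥0∞ => hF_conv _ (hAm c)
      refine ⟨∑ c ∈ T, c * l c, ?_⟩
      have hts : Tendsto (fun j => ∑ c ∈ T, c * μseq (φ j) (A c)) atTop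
          (nhds (∑ c ∈ T, c * l c)) := by
        refine tendsto_finset_sum _ fun c hc => ?_
        obtain ⟨x0, hx0⟩ := hAr c hc
        have hcne : c ≠ ⊤ := by
          refine (lt_of_le_of_lt ?_ one_lt_top).ne
          rw [← hx0]; exact (hg_le_h k x0).trans (h_le_one x0)
        exact ENNReal.Tendsto.const_mul (hl _) (Or.inr hcne)
      exact hts.congr fun j => (hrepr (φ j)).symm
    -- the candidate limit
    set a : ℕ → ℝ≥0∞ := fun j => μseq (φ j) E' with haj
    have ha_le_one : ∀ j, a j ≤ 1 := fun j => by haveI := hPn (φ j); exact prob_le_one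
    have key : limsup a atTop ≤ liminf a atTop := by
      refine ENNReal.le_of_forall_pos_le_add fun ε hε hfin' => ?_
      set δ : ℝ≥0∞ := (ε : ℝ≥0∞) / 2 / 2 with hδ
      have hεne : (ε : ℝ≥0∞) ≠ 0 := by exact_mod_cast hε.ne'
      have hδpos : 0 < δ := ENNReal.half_pos (ENNReal.half_pos hεne).ne'
      have hδε : δ + δ + δ ≤ (ε : ℝ≥0∞) := by
        calc δ + δ + δ ≤ (δ + δ) + (δ + δ) := by gcongr; exact le_self_add
          _ = (ε : ℝ≥0∞) / 2 + (ε : ℝ≥0∞) / 2 := by rw [ENNReal.add_halves]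
          _ = (ε : ℝ≥0∞) := ENNReal.add_halves _
      -- the bad sets
      set B : ℕ → Set X := fun k => {x | δ ≤ h x - g k x} with hB
      have hBmF : ∀ k, MeasurableSet[generateFrom S] (B k) := fun k =>
        @measurableSet_le_sub X (generateFrom S) h (g k) h_meas (hg_meas k) δ
      have hBm : ∀ k, MeasurableSet (B k) := fun k => hFm _ (hBmF k)
      have hBanti : Antitone B := by
        intro k k' hkk' x hx
        exact le_trans hx (tsub_le_tsub_left (hg_mono hkk' x) _)
      have hBempty : ⋂ k, B k = ∅ := by
        ext x
        simp only [mem_iInter, mem_empty_iff_false, iff_false, hB, mem_setOf_eq]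
        intro hx
        have hle : ∀ k, δ + g k x ≤ h x := by
          intro k
          calc δ + g k x ≤ (h x - g k x) + g k x := by gcongr; exact hx k
            _ = h x := tsub_add_cancel_of_le (hg_le_h k x)
        have h1 := iSup_le hle
        rw [← ENNReal.add_iSup, hg_sup x] at h1
        have h2 : h x < h x + δ :=
          ENNReal.lt_add_right ((h_le_one x).trans_lt one_lt_top).ne hδpos.ne'
        rw [add_comm] at h1
        exact absurd h1 (not_le_of_gt h2)
      obtain ⟨p, hp⟩ := hequi B hBm hBanti hBempty δ hδpos
      -- pointwise domination
      have hpt : ∀ x, h x ≤ g p x + δ + (B p).indicator (fun _ => (1 : ℝ≥0∞)) x := by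
        intro x
        by_cases hx : x ∈ B p
        · rw [indicator_of_mem hx]
          exact (h_le_one x).trans le_add_self
        · rw [indicator_of_notMem hx, add_zero]
          have h1 : h x - g p x < δ := not_le.1 hx
          have h2 : h x < δ + g p x := (ENNReal.sub_lt_iff_lt_right
            (((hg_le_h p x).trans (h_le_one x)).trans_lt one_lt_top).ne (hg_le_h p x)).1 h1
          exact h2.le.trans (by rw [add_comm])
      -- total mass of the densities
      have hInt1 : ∀ n, ∫⁻ x, f n x ∂lam = 1 := by
        intro n
        haveI := hPn n
        rw [← setLIntegral_univ, ← withDensity_apply _ MeasurableSet.univ, hwd n, measure_univ]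
      -- upper bound
      have hup : ∀ n, μseq n E' ≤ (∫⁻ x, f n x * g p x ∂lam) + δ + μseq n (B p) := by
        intro n
        rw [hkey n]
        have hmul : ∀ x, f n x * h x
            ≤ f n x * g p x + f n x * δ + f n x * (B p).indicator (fun _ => 1) x := by
          intro x
          calc f n x * h x ≤ f n x * (g p x + δ + (B p).indicator (fun _ => 1) x) := by
                gcongr; exact hpt x
            _ = f n x * g p x + f n x * δ + f n x * (B p).indicator (fun _ => 1) x := by ring
        calc ∫⁻ x, f n x * h x ∂lam
            ≤ ∫⁻ x, (f n x * g p x + f n x * δ + f n x * (B p).indicator (fun _ => 1) x) ∂lam :=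
              lintegral_mono hmul
          _ = (∫⁻ x, (f n x * g p x + f n x * δ) ∂lam)
              + ∫⁻ x, f n x * (B p).indicator (fun _ => 1) x ∂lam := by
              rw [lintegral_add_left (f := fun x => f n x * g p x + f n x * δ) (((hf_meas n).mul (hg_measm p)).add
                ((hf_meas n).mul measurable_const))]
          _ = (∫⁻ x, f n x * g p x ∂lam) + (∫⁻ x, f n x * δ ∂lam)
              + ∫⁻ x, f n x * (B p).indicator (fun _ => 1) x ∂lam := by
              rw [lintegral_add_left (f := fun x => f n x * g p x) ((hf_meas n).mul (hg_measm p))]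
          _ ≤ (∫⁻ x, f n x * g p x ∂lam) + δ + μseq n (B p) := by
              gcongr
              · rw [lintegral_mul_const _ (hf_meas n), hInt1 n, one_mul]
              · have hind : (fun x => f n x * (B p).indicator (fun _ => (1 : ℝ≥0∞)) x)
                    = (B p).indicator (f n) := by
                  ext x
                  by_cases hx : x ∈ B p <;> simp [hx]
                rw [hind, lintegral_indicator (hBm p), ← withDensity_apply _ (hBm p), hwd n]
      -- lower bound
      have hlow : ∀ n, ∫⁻ x, f n x * g p x ∂lam ≤ μseq n E' := by
        intro n
        rw [hkey n]
        refine lintegral_mono fun x => ?_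
        gcongr
        exact hg_le_h p x
      obtain ⟨v, hv⟩ := hsimple p
      have hvle : v ≤ 1 :=
        le_of_tendsto hv (Eventually.of_forall fun j => (hlow (φ j)).trans (ha_le_one j))
      have h1 : v ≤ liminf a atTop := by
        rw [← hv.liminf_eq]
        exact liminf_le_liminf (Eventually.of_forall fun j => hlow (φ j))
      have hev := (ENNReal.tendsto_nhds (hvle.trans_lt one_lt_top).ne).1 hv δ hδpos
      have h2 : limsup a atTop ≤ v + (ε : ℝ≥0∞) := by
        refine limsup_le_of_le (by isBoundedDefault) ?_
        filter_upwards [hev] with j hj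
        calc a j ≤ (∫⁻ x, f (φ j) x * g p x ∂lam) + δ + μseq (φ j) (B p) := hup (φ j)
          _ ≤ (v + δ) + δ + δ := by
              gcongr
              · exact hj.2
              · exact (hp _ (hμseq (φ j))).le
          _ = v + (δ + δ + δ) := by ring
          _ ≤ v + (ε : ℝ≥0∞) := by gcongr
      calc limsup a atTop ≤ v + (ε : ℝ≥0∞) := h2
        _ ≤ liminf a atTop + (ε : ℝ≥0∞) := by gcongr
    have heq : liminf a atTop = limsup a atTop := le_antisymm liminf_le_limsup key
    exact ⟨limsup a atTop, tendsto_of_liminf_eq_limsup heq rfl⟩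
  -- building the limit measure
  have hconv_all' : ∀ E' : Set X, MeasurableSet E' →
      Tendsto (fun j => μseq (φ j) E') atTop
        (nhds (limsup (fun j => μseq (φ j) E') atTop)) := by
    intro E' hE'
    obtain ⟨l, hl⟩ := hconv_all E' hE'
    rwa [hl.limsup_eq]
  have hm0 : (fun (s : Set X) (_ : MeasurableSet s) =>
      limsup (fun j => μseq (φ j) s) atTop) ∅ MeasurableSet.empty = 0 := by
    simp [measure_empty, limsup_const]
  have hmU : ∀ ⦃g : ℕ → Set X⦄ (h : ∀ i, MeasurableSet (g i)), Pairwise (Function.onFun Disjoint g) →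
      limsup (fun j => μseq (φ j) (⋃ i, g i)) atTop
        = ∑' i, limsup (fun j => μseq (φ j) (g i)) atTop := by
    intro g hg hgd
    refine tendsto_nhds_unique (hconv_all' _ (MeasurableSet.iUnion hg)) ?_
    exact tendsto_measure_iUnion_of_equi Q hprob hequi _ (fun j => hμseq (φ j)) g hgd hg _
      (fun k => hconv_all' _ (hg k))
  set μ : Measure X := Measure.ofMeasurable
    (fun s _ => limsup (fun j => μseq (φ j) s) atTop) hm0 hmU with hμ
  have hμ_apply : ∀ s : Set X, MeasurableSet s →
      μ s = limsup (fun j => μseq (φ j) s) atTop := fun s hs =>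
    Measure.ofMeasurable_apply s hs
  have hμP : IsProbabilityMeasure μ := by
    constructor
    rw [hμ_apply univ MeasurableSet.univ]
    have : ∀ j, μseq (φ j) univ = 1 := fun j => by haveI := hPn (φ j); exact measure_univ
    simp [this, limsup_const]
  exact ⟨φ, hφ, μ, hμP, fun E' hE' => (hμ_apply E' hE') ▸ hconv_all' E' hE'⟩
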